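/- Let U^- be the negative part of the two-parameter quantum group, with operators e_i', e_i'' ∈ End(U^-) characterized by [e_i, y] = (k_i e_i''(y) - k_i' e_i'(y))/(v_i - v_i^{-1}) for all y ∈ U^-. Then for all i, j ∈ I, the operators satisfy the commutation relation e_i' ∘ e_j'' = v^{i·j} t^{-⟨i,j⟩+⟨j,i⟩} · e_j'' ∘ e_i'. -/

import Mathlib

/- STATEMENT 4: On the negative part U^- of the two-parameter quantum group, the operators
e_i', e_i'' (characterized by [e_i, y] = (k_i e_i''(y) - k_i' e_i'(y))/(v_i - v_i^{-1}),
equivalently by e_i'(1) = e_i''(1) = 0 together with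
e_i'(f_j y) = δ_{ij} y + v^{-i·j} t^{⟨i,j⟩-⟨j,i⟩} f_j e_i'(y) and
e_i''(f_j y) = δ_{ij} y + v^{i·j} t^{⟨i,j⟩-⟨j,i⟩} f_j e_i''(y))
satisfy e_i' ∘ e_j'' = v^{i·j} t^{-⟨i,j⟩+⟨j,i⟩} e_j'' ∘ e_i'.
Here ⟨i,j⟩ = a i j and i·j = a i j + a j i. -/

noncomputable section

theorem eprime_edoubleprime_comm
    {K : Type*} [Field K] (v t : K) (hv : v ≠ 0) (ht : t ≠ 0)
    {I : Type*} [DecidableEq I] (a : I → I → ℤ)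
    {U : Type*} [Ring U] [Algebra K U] (f : I → U)
    (hgen : Algebra.adjoin K (Set.range f) = ⊤)
    (e' e'' : I → Module.End K U)
    (he'one : ∀ i, e' i 1 = 0) (he''one : ∀ i, e'' i 1 = 0)
    (he'f : ∀ i j y, e' i (f j * y) =
      (if i = j then y else 0) + (v ^ (-(a i j + a j i)) * t ^ (a i j - a j i)) • (f j * e' i y))
    (he''f : ∀ i j y, e'' i (f j * y) =
      (if i = j then y else 0) + (v ^ (a i j + a j i) * t ^ (a i j - a j i)) • (f j * e'' i y)) :
    ∀ i j, e' i ∘ₗ e'' j = (v ^ (a i j + a j i) * t ^ (a j i - a i j)) • (e'' j ∘ₗ e' i) := by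
  intro i j
  set c : K := v ^ (a i j + a j i) * t ^ (a j i - a i j) with hc
  have key : ∀ (l : List U), (∀ x ∈ l, x ∈ Set.range f) →
      e' i (e'' j l.prod) = c • e'' j (e' i l.prod) := by
    intro l
    induction l with
    | nil => intro _; simp [he'one, he''one]
    | cons x l ih =>
      intro hmem
      obtain ⟨k, rfl⟩ := hmem x List.mem_cons_self
      have hy := ih (fun z hz => hmem z (List.mem_cons_of_mem _ hz))
      simp only [List.prod_cons]
      rw [he''f j k, map_add, map_smul, he'f i k, he'f i k, map_add, map_smul,
        he''f j k, hy]
      by_cases hjk : j = k <;> by_cases hik : i = k <;>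
        simp only [hjk, hik, ↓reduceIte, ite_true, ite_false, map_zero, smul_zero,
          zero_add, add_zero, mul_smul_comm, smul_smul, hc] <;>
      · have hvz : ∀ m n : I, v ^ a m n ≠ 0 := fun _ _ => zpow_ne_zero _ hv
        have htz : ∀ m n : I, t ^ a m n ≠ 0 := fun _ _ => zpow_ne_zero _ ht
        match_scalars
        all_goals simp only [zpow_add₀ hv, zpow_add₀ ht, zpow_sub₀ hv, zpow_sub₀ ht, zpow_neg]
        all_goals try field_simp [hvz, htz]
        all_goals try ring
  apply LinearMap.ext
  intro y
  have hy : y ∈ Subalgebra.toSubmodule (Algebra.adjoin K (Set.range f)) := by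
    rw [hgen]; exact Submodule.mem_top
  rw [Algebra.adjoin_eq_span] at hy
  simp only [LinearMap.comp_apply, LinearMap.smul_apply]
  induction hy using Submodule.span_induction with
  | mem x hx =>
    obtain ⟨l, hl, rfl⟩ := Submonoid.exists_list_of_mem_closure hx
    exact key l hl
  | zero => simp
  | add x y' _ _ hx hy' => simp [map_add, hx, hy', smul_add]
  | smul r x _ hx => simp [map_smul, hx, smul_comm r c]
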